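/- Let Z and Z' be tails of a nodal curve C with k_Z > 1 and k_{Z'} > 1. If Z ∧ Z' is a nonempty proper subcurve with k_{Z∧Z'} ∈ {1,2,3}, then in fact k_{Z∧Z'} > 1 and Z ∧ Z' is a tail. -/

import Mathlib

open Set

/- Dual multigraph model of a nodal curve: vertices `V` are irreducible
components, edges `E` are nodes, with endpoint maps `s t : E → V`. -/

/-- The set of terminal points (edges of the cut) of a vertex subset `Z`. -/
def TermPts {V E : Type} (s t : E → V) (Z : Set V) : Set E :=
  {e | (s e ∈ Z ∧ t e ∉ Z) ∨ (t e ∈ Z ∧ s e ∉ Z)}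

/-- A subcurve is a nonempty proper subset of the components. -/
def Subcurve {V : Type} (Z : Set V) : Prop := Z.Nonempty ∧ Z ≠ Set.univ

/-- Connectivity of the induced sub-multigraph on `Z`. -/
def ConnOn {V E : Type} (s t : E → V) (Z : Set V) : Prop :=
  ∀ x ∈ Z, ∀ y ∈ Z,
    Relation.ReflTransGen
      (fun a b => a ∈ Z ∧ b ∈ Z ∧ ∃ e, (s e = a ∧ t e = b) ∨ (s e = b ∧ t e = a)) x y

/-- A tail is a subcurve with both sides connected. -/
def IsTail {V E : Type} (s t : E → V) (Z : Set V) : Prop :=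
  Subcurve Z ∧ ConnOn s t Z ∧ ConnOn s t Zᶜ

/-- `k_Z`, the number of terminal points of `Z`. -/
noncomputable def kcut {V E : Type} (s t : E → V) (Z : Set V) : ℕ :=
  (TermPts s t Z).ncard

/-- The pair `(Z, Z')` is free if the edge cuts are disjoint. -/
def FreePair {V E : Type} (s t : E → V) (Z Z' : Set V) : Prop :=
  TermPts s t Z ∩ TermPts s t Z' = ∅

/-- The pair `(Z, Z')` is perfect. -/
def PerfectPair {V : Type} (Z Z' : Set V) : Prop :=
  Z ⊆ Z' ∨ Z' ⊆ Z ∨ Zᶜ ⊆ Z' ∨ Z' ⊆ Zᶜ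

section helpers
variable {V E : Type} (s t : E → V)

/-- the step relation on a vertex set -/
def rel (K : Set V) (a b : V) : Prop :=
  a ∈ K ∧ b ∈ K ∧ ∃ e, (s e = a ∧ t e = b) ∨ (s e = b ∧ t e = a)

/-- step relation avoiding a set of edges -/
def relE (F : Set E) (a b : V) : Prop :=
  ∃ e ∉ F, (s e = a ∧ t e = b) ∨ (s e = b ∧ t e = a)

lemma rel_symm (K : Set V) : Symmetric (rel s t K) := by
  rintro a b ⟨ha, hb, e, h | h⟩ <;> exact ⟨hb, ha, e, by tauto⟩

lemma relE_symm (F : Set E) : Symmetric (relE s t F) := by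
  rintro a b ⟨e, he, h | h⟩ <;> exact ⟨e, he, by tauto⟩

lemma rel_mono {A B : Set V} (h : A ⊆ B) {x y : V}
    (hxy : Relation.ReflTransGen (rel s t A) x y) :
    Relation.ReflTransGen (rel s t B) x y :=
  Relation.ReflTransGen.mono (fun a b ⟨ha, hb, he⟩ => ⟨h ha, h hb, he⟩) x y hxy

lemma cut_nonempty (hC : ConnOn s t Set.univ) {S : Set V}
    (h1 : S.Nonempty) (h2 : S ≠ Set.univ) : (TermPts s t S).Nonempty := by
  obtain ⟨x, hx⟩ := h1
  have h2' : ∃ y, y ∉ S := by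
    by_contra h; push_neg at h; exact h2 (Set.eq_univ_of_forall h)
  obtain ⟨y, hy⟩ := h2'
  have h := hC x trivial y trivial
  clear h2
  induction h with
  | refl => exact absurd hx hy
  | @tail b c h' step ih =>
    by_cases hb : b ∈ S
    · obtain ⟨-, -, e, he⟩ := step
      refine ⟨e, ?_⟩
      rcases he with ⟨h1, h2⟩ | ⟨h1, h2⟩
      · exact Or.inl ⟨h1 ▸ hb, h2 ▸ hy⟩
      · exact Or.inr ⟨h2 ▸ hb, h1 ▸ hy⟩
    · exact ih hb

/-- paths avoiding the whole cut of `S` cannot leave `S` -/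
lemma stay_in {S : Set V} {F : Set E} (hF : TermPts s t S ⊆ F) {x y : V}
    (h : Relation.ReflTransGen (relE s t F) x y) (hx : x ∈ S) : y ∈ S := by
  induction h with
  | refl => exact hx
  | @tail b c h' step ih =>
    obtain ⟨e, heF, he⟩ := step
    by_contra hc
    apply heF; apply hF
    rcases he with ⟨h1, h2⟩ | ⟨h1, h2⟩
    · exact Or.inl ⟨h1 ▸ ih, h2 ▸ hc⟩
    · exact Or.inr ⟨h2 ▸ ih, h1 ▸ hc⟩

end helpers

section helpers2
variable {V E : Type} [Fintype E] (s t : E → V)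

lemma rel_to_relE {K : Set V} {e : E} (he : s e ∉ K ∨ t e ∉ K) {x y : V}
    (h : Relation.ReflTransGen (rel s t K) x y) :
    Relation.ReflTransGen (relE s t {e}) x y := by
  refine Relation.ReflTransGen.mono ?_ x y h
  rintro a b ⟨ha, hb, f, hf⟩
  refine ⟨f, ?_, hf⟩
  simp only [Set.mem_singleton_iff]
  rintro rfl
  rcases hf with ⟨e1, e2⟩ | ⟨e1, e2⟩ <;> rcases he with h | h <;> simp_all

/-- removing one edge from the cut of a tail with `k > 1` keeps the graph connected -/
lemma keyfact {Z : Set V} (hZ : IsTail s t Z) (hk : 1 < kcut s t Z)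
    {e : E} (he : e ∈ TermPts s t Z) (x y : V) :
    Relation.ReflTransGen (relE s t {e}) x y := by
  have hfin : (TermPts s t Z).Finite := Set.toFinite _
  have hf : ∃ f ∈ TermPts s t Z, f ≠ e := by
    obtain ⟨a, b, ha, hb, hab⟩ := (Set.one_lt_ncard_iff hfin).mp hk
    by_cases hae : a = e
    · exact ⟨b, hb, fun h => hab (h ▸ hae ▸ rfl)⟩
    · exact ⟨a, ha, hae⟩
  obtain ⟨f, hfZ, hfe⟩ := hf
  have heZ : s e ∉ Z ∨ t e ∉ Z := by rcases he with ⟨h1, h2⟩ | ⟨h1, h2⟩ <;> tauto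
  have heZc : s e ∉ Zᶜ ∨ t e ∉ Zᶜ := by
    rcases he with ⟨h1, h2⟩ | ⟨h1, h2⟩ <;> simp only [Set.mem_compl_iff, not_not] <;> tauto
  have hcross : ∃ p q, p ∈ Z ∧ q ∉ Z ∧ relE s t {e} p q := by
    rcases hfZ with ⟨h1, h2⟩ | ⟨h1, h2⟩
    · exact ⟨s f, t f, h1, h2, ⟨f, by simpa using hfe, Or.inl ⟨rfl, rfl⟩⟩⟩
    · exact ⟨t f, s f, h1, h2, ⟨f, by simpa using hfe, Or.inr ⟨rfl, rfl⟩⟩⟩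
  obtain ⟨p, q, hp, hq, hpq⟩ := hcross
  have inZ : ∀ u ∈ Z, ∀ v ∈ Z, Relation.ReflTransGen (relE s t {e}) u v := fun u hu v hv =>
    rel_to_relE s t heZ (hZ.2.1 u hu v hv)
  have inZc : ∀ u ∉ Z, ∀ v, v ∉ Z → Relation.ReflTransGen (relE s t {e}) u v := fun u hu v hv =>
    rel_to_relE s t heZc (hZ.2.2 u hu v hv)
  by_cases hx : x ∈ Z <;> by_cases hy : y ∈ Z
  · exact inZ x hx y hy
  · exact ((inZ x hx p hp).tail hpq).trans (inZc q hq y hy)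
  · exact ((inZc x hx q hq).tail (relE_symm s t _ hpq)).trans (inZ p hp y hy)
  · exact inZc x hx y hy

/-- no nonempty proper `S` has its full cut inside a single edge of the cut of
a tail with `k > 1` -/
lemma no_small_cut {Z : Set V} (hZ : IsTail s t Z) (hk : 1 < kcut s t Z)
    {S : Set V} (hS1 : S.Nonempty) (hS2 : S ≠ Set.univ)
    {e : E} (he : e ∈ TermPts s t Z) (hTS : TermPts s t S ⊆ {e}) : False := by
  obtain ⟨x, hx⟩ := hS1
  have : ∃ y, y ∉ S := by
    by_contra h; push_neg at h; exact hS2 (Set.eq_univ_of_forall h)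
  obtain ⟨y, hy⟩ := this
  exact hy (stay_in s t hTS (keyfact s t hZ hk he x y) hx)

lemma termW_subset (Z Z' : Set V) :
    TermPts s t (Z ∩ Z') ⊆ TermPts s t Z ∪ TermPts s t Z' := by
  intro e he
  simp only [TermPts, Set.mem_setOf_eq, Set.mem_inter_iff, Set.mem_union] at *
  tauto

end helpers2

set_option maxHeartbeats 2000000 in
/-- Lemma 3.3 (i): for tails `Z, Z'` with `k_Z > 1`, `k_{Z'} > 1`, if `Z ∧ Z'`
is a nonempty proper subcurve with `k_{Z∧Z'} ∈ {1,2,3}`, then `k_{Z∧Z'} > 1`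
and `Z ∧ Z'` is a tail. -/
theorem stmt_4 {V E : Type} [Fintype V] [Fintype E] (s t : E → V)
    (hC : ConnOn s t Set.univ) (Z Z' : Set V)
    (hZ : IsTail s t Z) (hZ' : IsTail s t Z')
    (hkZ : 1 < kcut s t Z) (hkZ' : 1 < kcut s t Z')
    (hsub : Subcurve (Z ∩ Z'))
    (hk : kcut s t (Z ∩ Z') ∈ ({1, 2, 3} : Set ℕ)) :
    1 < kcut s t (Z ∩ Z') ∧ IsTail s t (Z ∩ Z') := by
  set W := Z ∩ Z' with hWdef
  have hTW : TermPts s t W ⊆ TermPts s t Z ∪ TermPts s t Z' := termW_subset s t Z Z'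
  simp only [Set.mem_insert_iff, Set.mem_singleton_iff] at hk
  have hk3 : kcut s t W ≤ 3 := by omega
  -- Part 1 : `k_W > 1`
  have hgt : 1 < kcut s t W := by
    rcases Nat.lt_or_ge 1 (kcut s t W) with h | h
    · exact h
    · exfalso
      have h1 : kcut s t W = 1 := by omega
      obtain ⟨e, hTe⟩ := Set.ncard_eq_one.mp h1
      have heW : e ∈ TermPts s t W := by rw [hTe]; exact rfl
      rcases hTW heW with he | he
      · exact no_small_cut s t hZ hkZ hsub.1 hsub.2 he (hTe ▸ subset_rfl)
      · exact no_small_cut s t hZ' hkZ' hsub.1 hsub.2 he (hTe ▸ subset_rfl)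
  -- Part 2a : `W` is connected
  have hconnW : ConnOn s t W := by
    by_contra hcon
    unfold ConnOn at hcon
    push_neg at hcon
    obtain ⟨x, hxW, y, hyW, hxy⟩ := hcon
    set X := {v | v ∈ W ∧ Relation.ReflTransGen (rel s t W) x v} with hXdef
    have hxX : x ∈ X := ⟨hxW, Relation.ReflTransGen.refl⟩
    have hyX : y ∉ X := fun h => hxy h.2
    have hXW : X ⊆ W := fun v hv => hv.1
    have hstep : ∀ a ∈ X, ∀ b, rel s t W a b → b ∈ X :=
      fun a ha b hr => ⟨hr.2.1, ha.2.tail hr⟩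
    set Y := W \ X with hYdef
    have hyY : y ∈ Y := ⟨hyW, hyX⟩
    have hxY : x ∉ Y := fun h => h.2 hxX
    have hXT : ∀ e ∈ TermPts s t X, (s e ∈ X ∧ t e ∉ W) ∨ (t e ∈ X ∧ s e ∉ W) := by
      intro e he
      rcases he with ⟨h1, h2⟩ | ⟨h1, h2⟩
      · exact Or.inl ⟨h1, fun htW =>
          h2 (hstep _ h1 _ ⟨hXW h1, htW, e, Or.inl ⟨rfl, rfl⟩⟩)⟩
      · exact Or.inr ⟨h1, fun hsW =>
          h2 (hstep _ h1 _ ⟨hXW h1, hsW, e, Or.inr ⟨rfl, rfl⟩⟩)⟩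
    have hYT : ∀ e ∈ TermPts s t Y, (s e ∈ Y ∧ t e ∉ W) ∨ (t e ∈ Y ∧ s e ∉ W) := by
      intro e he
      rcases he with ⟨h1, h2⟩ | ⟨h1, h2⟩
      · refine Or.inl ⟨h1, fun htW => ?_⟩
        have htX : t e ∈ X := by
          by_contra h; exact h2 ⟨htW, h⟩
        exact h1.2 (hstep _ htX _ ⟨htW, h1.1, e, Or.inr ⟨rfl, rfl⟩⟩)
      · refine Or.inr ⟨h1, fun hsW => ?_⟩
        have hsX : s e ∈ X := by
          by_contra h; exact h2 ⟨hsW, h⟩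
        exact h1.2 (hstep _ hsX _ ⟨hsW, h1.1, e, Or.inl ⟨rfl, rfl⟩⟩)
    have hXsub : TermPts s t X ⊆ TermPts s t W := by
      intro e he
      rcases hXT e he with ⟨h1, h2⟩ | ⟨h1, h2⟩
      · exact Or.inl ⟨hXW h1, h2⟩
      · exact Or.inr ⟨hXW h1, h2⟩
    have hYsub : TermPts s t Y ⊆ TermPts s t W := by
      intro e he
      rcases hYT e he with ⟨h1, h2⟩ | ⟨h1, h2⟩
      · exact Or.inl ⟨h1.1, h2⟩
      · exact Or.inr ⟨h1.1, h2⟩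
    have hdisj : Disjoint (TermPts s t X) (TermPts s t Y) := by
      rw [Set.disjoint_left]
      intro e he he'
      rcases hXT e he with ⟨h1, h2⟩ | ⟨h1, h2⟩ <;>
        rcases hYT e he' with ⟨h3, h4⟩ | ⟨h3, h4⟩
      · exact h3.2 h1
      · exact h2 h3.1
      · exact h2 h3.1
      · exact h3.2 h1
    have hXne : (TermPts s t X).Nonempty :=
      cut_nonempty s t hC ⟨x, hxX⟩ (fun h => hyX (h.symm ▸ Set.mem_univ y))
    have hYne : (TermPts s t Y).Nonempty :=
      cut_nonempty s t hC ⟨y, hyY⟩ (fun h => hxY (h.symm ▸ Set.mem_univ x))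
    have hsum : (TermPts s t X).ncard + (TermPts s t Y).ncard ≤ 3 := by
      rw [← Set.ncard_union_eq hdisj (Set.toFinite _) (Set.toFinite _)]
      exact le_trans (Set.ncard_le_ncard (Set.union_subset hXsub hYsub) (Set.toFinite _)) hk3
    have hposX : 0 < (TermPts s t X).ncard := (Set.ncard_pos (Set.toFinite _)).mpr hXne
    have hposY : 0 < (TermPts s t Y).ncard := (Set.ncard_pos (Set.toFinite _)).mpr hYne
    have hone : (TermPts s t X).ncard = 1 ∨ (TermPts s t Y).ncard = 1 := by omega
    rcases hone with h1 | h1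
    · obtain ⟨e, hTe⟩ := Set.ncard_eq_one.mp h1
      have heW : e ∈ TermPts s t W := hXsub (by rw [hTe]; exact rfl)
      rcases hTW heW with he | he
      · exact no_small_cut s t hZ hkZ ⟨x, hxX⟩
          (fun h => hyX (h.symm ▸ Set.mem_univ y)) he (hTe ▸ subset_rfl)
      · exact no_small_cut s t hZ' hkZ' ⟨x, hxX⟩
          (fun h => hyX (h.symm ▸ Set.mem_univ y)) he (hTe ▸ subset_rfl)
    · obtain ⟨e, hTe⟩ := Set.ncard_eq_one.mp h1
      have heW : e ∈ TermPts s t W := hYsub (by rw [hTe]; exact rfl)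
      rcases hTW heW with he | he
      · exact no_small_cut s t hZ hkZ ⟨y, hyY⟩
          (fun h => hxY (h.symm ▸ Set.mem_univ x)) he (hTe ▸ subset_rfl)
      · exact no_small_cut s t hZ' hkZ' ⟨y, hyY⟩
          (fun h => hxY (h.symm ▸ Set.mem_univ x)) he (hTe ▸ subset_rfl)
  -- Part 2b : `Wᶜ` is connected
  have hZcW : Zᶜ ⊆ Wᶜ := Set.compl_subset_compl.mpr Set.inter_subset_left
  have hZ'cW : Z'ᶜ ⊆ Wᶜ := Set.compl_subset_compl.mpr Set.inter_subset_right
  have hsymmW : Symmetric (Relation.ReflTransGen (rel s t Wᶜ)) :=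
    by haveI : Std.Symm (rel s t Wᶜ) := ⟨fun _ _ h => rel_symm s t Wᶜ h⟩; exact fun _ _ h => Std.Symm.symm _ _ h
  have hsplit : ∀ v ∈ Wᶜ, v ∉ Z ∨ v ∉ Z' := by
    intro v hv
    by_contra h; push_neg at h; exact hv ⟨h.1, h.2⟩
  have hconnWc : ConnOn s t Wᶜ := by
    by_cases hcase : (Zᶜ ∩ Z'ᶜ).Nonempty
    · obtain ⟨w, hw1, hw2⟩ := hcase
      intro x hx y hy
      have reach : ∀ v ∈ Wᶜ, Relation.ReflTransGen (rel s t Wᶜ) v w := by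
        intro v hv
        rcases hsplit v hv with h | h
        · exact rel_mono s t hZcW (hZ.2.2 v h w hw1)
        · exact rel_mono s t hZ'cW (hZ'.2.2 v h w hw2)
      exact (reach x hx).trans (hsymmW (reach y hy))
    · have hun : ∀ v, v ∈ Z ∨ v ∈ Z' := by
        intro v
        by_contra h; push_neg at h; exact hcase ⟨v, h.1, h.2⟩
      have hex : ∃ e, (s e ∉ Z ∧ t e ∉ Z') ∨ (s e ∉ Z' ∧ t e ∉ Z) := by
        by_contra hBC
        push_neg at hBC
        have hZsub : TermPts s t Z ⊆ TermPts s t W := by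
          intro e he
          have h1 := hBC e
          have h2 := hun (s e)
          have h3 := hun (t e)
          simp only [TermPts, Set.mem_setOf_eq, hWdef, Set.mem_inter_iff] at he ⊢
          tauto
        have hZ'sub : TermPts s t Z' ⊆ TermPts s t W := by
          intro e he
          have h1 := hBC e
          have h2 := hun (s e)
          have h3 := hun (t e)
          simp only [TermPts, Set.mem_setOf_eq, hWdef, Set.mem_inter_iff] at he ⊢
          tauto
        have hd : Disjoint (TermPts s t Z) (TermPts s t Z') := by
          rw [Set.disjoint_left]
          intro e he he'
          have h1 := hBC e
          have h2 := hun (s e)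
          have h3 := hun (t e)
          simp only [TermPts, Set.mem_setOf_eq] at he he'
          tauto
        have hsum : kcut s t Z + kcut s t Z' ≤ 3 := by
          unfold kcut
          rw [← Set.ncard_union_eq hd (Set.toFinite _) (Set.toFinite _)]
          exact le_trans
            (Set.ncard_le_ncard (Set.union_subset hZsub hZ'sub) (Set.toFinite _)) hk3
        omega
      obtain ⟨e, he⟩ := hex
      have hpq : ∃ p q, p ∉ Z ∧ q ∉ Z' ∧ rel s t Wᶜ p q := by
        rcases he with ⟨h1, h2⟩ | ⟨h1, h2⟩
        · exact ⟨s e, t e, h1, h2,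
            ⟨fun h => h1 h.1, fun h => h2 h.2, e, Or.inl ⟨rfl, rfl⟩⟩⟩
        · exact ⟨t e, s e, h2, h1,
            ⟨fun h => h2 h.1, fun h => h1 h.2, e, Or.inr ⟨rfl, rfl⟩⟩⟩
      obtain ⟨p, q, hp, hq, hpq⟩ := hpq
      intro x hx y hy
      have reach : ∀ v ∈ Wᶜ, Relation.ReflTransGen (rel s t Wᶜ) v p := by
        intro v hv
        rcases hsplit v hv with h | h
        · exact rel_mono s t hZcW (hZ.2.2 v h p hp)
        · exact Relation.ReflTransGen.tail
            (rel_mono s t hZ'cW (hZ'.2.2 v h q hq)) (rel_symm s t _ hpq)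
      exact (reach x hx).trans (hsymmW (reach y hy))
  exact ⟨hgt, hsub, hconnW, hconnWc⟩
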